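/- Let R be a ring, M a right R-module, and X, Y countably generated modules in Add(M) (direct summands of direct sums of copies of M). Then the ideal of the category Add(M) consisting of morphisms factoring through arbitrary direct sums of copies of X equals the corresponding ideal for Y if and only if X^(ω) ≅ Y^(ω), where X^(ω) denotes the countable direct sum of copies of X. -/

import Mathlib

universe u v

/-- `X` is in `Add M`: `X` is (isomorphic to) a direct summand of a direct sum of
copies of `M`. -/
def InAdd (R : Type u) [Ring R] (M : Type v) [AddCommGroup M] [Module R M]
    (X : Type v) [AddCommGroup X] [Module R X] : Prop :=
  ∃ (Λ : Type v) (ι : X →ₗ[R] (Λ →₀ M)) (π : (Λ →₀ M) →ₗ[R] X), π ∘ₗ ι = LinearMap.id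

/-- `X` is countably generated as an `R`-module. -/
def CountablyGeneratedModule (R : Type u) [Ring R] (X : Type v) [AddCommGroup X]
    [Module R X] : Prop :=
  ∃ s : Set X, s.Countable ∧ Submodule.span R s = ⊤

/-- `f` factors through a direct sum of copies of `X` (membership in the ideal `𝒥_X`). -/
def FactorsThroughCopies (R : Type u) [Ring R] (X : Type v) [AddCommGroup X] [Module R X]
    {A B : Type v} [AddCommGroup A] [Module R A] [AddCommGroup B] [Module R B]
    (f : A →ₗ[R] B) : Prop :=
  ∃ (Λ : Type v) (g : A →ₗ[R] (Λ →₀ X)) (h : (Λ →₀ X) →ₗ[R] B), h ∘ₗ g = f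

section Aux

variable {R : Type u} [Ring R]

/-- `A` is a direct summand of `B`. -/
def MySummand (R : Type u) [Ring R] (A : Type*) (B : Type*) [AddCommGroup A] [Module R A]
    [AddCommGroup B] [Module R B] : Prop :=
  ∃ (g : A →ₗ[R] B) (h : B →ₗ[R] A), h ∘ₗ g = LinearMap.id

theorem MySummand.trans {A B C : Type*} [AddCommGroup A] [Module R A] [AddCommGroup B]
    [Module R B] [AddCommGroup C] [Module R C] (h1 : MySummand R A B) (h2 : MySummand R B C) :
    MySummand R A C := by
  obtain ⟨g1, h1', e1⟩ := h1
  obtain ⟨g2, h2', e2⟩ := h2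
  exact ⟨g2 ∘ₗ g1, h1' ∘ₗ h2', by
    rw [LinearMap.comp_assoc, ← LinearMap.comp_assoc g1, e2, LinearMap.id_comp, e1]⟩

theorem MySummand.of_equiv {A B : Type*} [AddCommGroup A] [Module R A] [AddCommGroup B]
    [Module R B] (e : A ≃ₗ[R] B) : MySummand R A B :=
  ⟨e.toLinearMap, e.symm.toLinearMap, by ext x; simp⟩

theorem MySummand.finsupp {ι : Type*} {A B : Type*} [AddCommGroup A] [Module R A]
    [AddCommGroup B] [Module R B] (h : MySummand R A B) :
    MySummand R (ι →₀ A) (ι →₀ B) := by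
  obtain ⟨g, h', e⟩ := h
  exact ⟨Finsupp.mapRange.linearMap g, Finsupp.mapRange.linearMap h', by
    rw [← Finsupp.mapRange.linearMap_comp, e, Finsupp.mapRange.linearMap_id]⟩

/-- Splitting: if `h ∘ g = id` then `B ≃ A × ker h`. -/
noncomputable def splitEquiv {A B : Type*} [AddCommGroup A] [Module R A] [AddCommGroup B]
    [Module R B] (g : A →ₗ[R] B) (h : B →ₗ[R] A) (hgh : h ∘ₗ g = LinearMap.id) :
    B ≃ₗ[R] A × (LinearMap.ker h) := by
  have hgh' : ∀ a, h (g a) = a := fun a => congrArg (fun m => m a) hgh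
  refine LinearEquiv.ofLinear
    (LinearMap.prod h (LinearMap.codRestrict (LinearMap.ker h) (LinearMap.id - g ∘ₗ h) ?_))
    (g ∘ₗ LinearMap.fst R A (LinearMap.ker h) +
      (LinearMap.ker h).subtype ∘ₗ LinearMap.snd R A (LinearMap.ker h)) ?_ ?_
  · intro b; simp [hgh']
  · ext x <;> simp [hgh']
  · ext b; simp [hgh']

/-- `(ι →₀ (P × Q)) ≃ (ι →₀ P) × (ι →₀ Q)`. -/
noncomputable def finsuppProdEquivProd (ι : Type*) (P Q : Type*) [AddCommGroup P] [Module R P]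
    [AddCommGroup Q] [Module R Q] : (ι →₀ (P × Q)) ≃ₗ[R] (ι →₀ P) × (ι →₀ Q) := by
  refine LinearEquiv.ofLinear
    (LinearMap.prod (Finsupp.mapRange.linearMap (LinearMap.fst R P Q))
      (Finsupp.mapRange.linearMap (LinearMap.snd R P Q)))
    ((Finsupp.mapRange.linearMap (LinearMap.inl R P Q)) ∘ₗ LinearMap.fst R (ι →₀ P) (ι →₀ Q) +
      (Finsupp.mapRange.linearMap (LinearMap.inr R P Q)) ∘ₗ LinearMap.snd R (ι →₀ P) (ι →₀ Q))
    ?_ ?_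
  · ext i p <;> simp
  · ext i p <;> simp

/-- `(P^ω)^ω ≃ P^ω`. -/
noncomputable def omegaOmegaEquiv (P : Type*) [AddCommGroup P] [Module R P] :
    (ℕ →₀ (ℕ →₀ P)) ≃ₗ[R] (ℕ →₀ P) :=
  (Finsupp.finsuppProdLEquiv R).symm.trans (Finsupp.domLCongr (Denumerable.eqv (ℕ × ℕ)))

/-- `P^ω ≃ P × P^ω`. -/
noncomputable def peelEquiv (P : Type*) [AddCommGroup P] [Module R P] :
    (ℕ →₀ P) ≃ₗ[R] P × (ℕ →₀ P) :=
  (Finsupp.domLCongr ((Denumerable.eqv (Option ℕ)).symm.trans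
      (Equiv.optionEquivSumPUnit.{0} ℕ))).trans
    ((Finsupp.sumFinsuppLEquivProdFinsupp R).trans
      ((LinearEquiv.prodCongr (LinearEquiv.refl R (ℕ →₀ P))
        (Finsupp.LinearEquiv.finsuppUnique R P PUnit.{1})).trans
        (LinearEquiv.prodComm R (ℕ →₀ P) P)))

/-- A countably generated summand of `Λ →₀ Y` is a summand of `ℕ →₀ Y`. -/
theorem summand_shrink {X Y : Type v} [AddCommGroup X] [Module R X] [AddCommGroup Y] [Module R Y]
    {Λ : Type*} (hXc : CountablyGeneratedModule R X)
    (hs : MySummand R X (Λ →₀ Y)) : MySummand R X (ℕ →₀ Y) := by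
  obtain ⟨s, hsc, hss⟩ := hXc
  obtain ⟨g, h', hgh⟩ := hs
  set Λ₀ : Set Λ := ⋃ x ∈ s, ((g x).support : Set Λ) with hΛ₀
  have hΛ₀c : Λ₀.Countable := hsc.biUnion fun x _ => (g x).support.countable_toSet
  have hmem : ∀ x : X, g x ∈ Finsupp.supported Y R Λ₀ := by
    have hle : Submodule.span R s ≤ (Finsupp.supported Y R Λ₀).comap g := by
      rw [Submodule.span_le]
      intro a ha
      simp only [Set.mem_preimage, SetLike.mem_coe, Submodule.mem_comap, Finsupp.mem_supported]
      exact Set.subset_biUnion_of_mem (u := fun x => ((g x).support : Set Λ)) ha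
    intro x
    have hx : x ∈ Submodule.span R s := by rw [hss]; trivial
    exact hle hx
  haveI : Countable ↥Λ₀ := hΛ₀c.to_subtype
  obtain ⟨e⟩ := nonempty_embedding_nat ↥Λ₀
  set eq1 := Finsupp.supportedEquivFinsupp (M := Y) (R := R) Λ₀ with heq1
  have hcm : ∀ v : (↥Λ₀ →₀ Y),
      Finsupp.lcomapDomain (M := Y) (R := R) e e.injective
        (Finsupp.lmapDomain Y R e v) = v := by
    intro v
    ext a
    simp [Finsupp.lcomapDomain, Finsupp.lmapDomain,
      Finsupp.mapDomain_apply e.injective]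
  refine ⟨Finsupp.lmapDomain Y R e ∘ₗ (eq1.toLinearMap ∘ₗ
      (g.codRestrict (Finsupp.supported Y R Λ₀) hmem)),
    h' ∘ₗ ((Finsupp.supported Y R Λ₀).subtype ∘ₗ
      (eq1.symm.toLinearMap ∘ₗ Finsupp.lcomapDomain e e.injective)), ?_⟩
  ext x
  have hgh' : h' (g x) = x := congrArg (fun m => m x) hgh
  have h1 : Finsupp.mapDomain (⇑e) (eq1 ((LinearMap.codRestrict (Finsupp.supported Y R Λ₀) g hmem) x))
      = Finsupp.lmapDomain Y R ⇑e (eq1 ((LinearMap.codRestrict (Finsupp.supported Y R Λ₀) g hmem) x)) := rfl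
  simp only [LinearMap.coe_comp, Function.comp_apply, LinearEquiv.coe_coe, Submodule.coe_subtype,
    Finsupp.lmapDomain_apply, LinearMap.id_coe, id_eq]
  rw [h1, hcm, LinearEquiv.symm_apply_apply]
  simpa using hgh'

/-- If `X` is a summand of `ℕ →₀ Y`, then anything factoring through copies of `X` factors
through copies of `Y`. -/
theorem factors_transfer {X Y : Type v} [AddCommGroup X] [Module R X] [AddCommGroup Y]
    [Module R Y] (hS : MySummand R X (ℕ →₀ Y)) {A B : Type v} [AddCommGroup A] [Module R A]
    [AddCommGroup B] [Module R B] {f : A →ₗ[R] B} (hf : FactorsThroughCopies R X f) :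
    FactorsThroughCopies R Y f := by
  obtain ⟨Λ, g, h, hgh⟩ := hf
  obtain ⟨ι, π, hπι⟩ := hS
  refine ⟨Λ × ℕ, (Finsupp.finsuppProdLEquiv R).symm.toLinearMap ∘ₗ
      (Finsupp.mapRange.linearMap ι ∘ₗ g),
    h ∘ₗ (Finsupp.mapRange.linearMap π ∘ₗ (Finsupp.finsuppProdLEquiv R).toLinearMap), ?_⟩
  ext a
  have h1 : ∀ v : (Λ →₀ X), Finsupp.mapRange.linearMap π (Finsupp.mapRange.linearMap ι v) = v := by
    intro v
    rw [show (Finsupp.mapRange.linearMap π) ((Finsupp.mapRange.linearMap ι) v)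
        = (Finsupp.mapRange.linearMap π ∘ₗ Finsupp.mapRange.linearMap ι) v from rfl,
      ← Finsupp.mapRange.linearMap_comp, hπι, Finsupp.mapRange.linearMap_id]
    rfl
  have h2 : h (g a) = f a := congrArg (fun m => m a) hgh
  simp only [LinearMap.coe_comp, Function.comp_apply, LinearEquiv.coe_coe,
    LinearEquiv.apply_symm_apply]
  rw [h1, h2]

/-- Eilenberg swindle: if `A` is a summand of `B` and both are `ω`-stable, `B ≃ A × B`. -/
theorem absorb {A B : Type v} [AddCommGroup A] [Module R A] [AddCommGroup B] [Module R B]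
    (hAB : MySummand R A B) (eB : (ℕ →₀ B) ≃ₗ[R] B) :
    Nonempty (B ≃ₗ[R] A × B) := by
  obtain ⟨g, h, hgh⟩ := hAB
  let C := LinearMap.ker h
  let e1 : B ≃ₗ[R] A × C := splitEquiv g h hgh
  refine ⟨eB.symm.trans ((Finsupp.mapRange.linearEquiv e1).trans
    ((finsuppProdEquivProd ℕ A C).trans
    ((LinearEquiv.prodCongr (peelEquiv A) (LinearEquiv.refl R (ℕ →₀ C))).trans
    ((LinearEquiv.prodAssoc R A (ℕ →₀ A) (ℕ →₀ C)).trans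
    ((LinearEquiv.prodCongr (LinearEquiv.refl R A)
      ((finsuppProdEquivProd ℕ A C).symm.trans
        ((Finsupp.mapRange.linearEquiv e1.symm).trans eB))))))))⟩

end Aux

/-- For countably generated `X, Y ∈ Add(M)`, the ideals `𝒥_X` and `𝒥_Y` of `Add(M)`
coincide iff `X^(ω) ≅ Y^(ω)`. -/
theorem stmt0 (R : Type u) [Ring R] (M : Type v) [AddCommGroup M] [Module R M]
    (X Y : Type v) [AddCommGroup X] [Module R X] [AddCommGroup Y] [Module R Y]
    (hX : InAdd R M X) (hY : InAdd R M Y)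
    (hXc : CountablyGeneratedModule R X) (hYc : CountablyGeneratedModule R Y) :
    (∀ (A B : Type v) [AddCommGroup A] [Module R A] [AddCommGroup B] [Module R B],
        InAdd R M A → InAdd R M B → ∀ f : A →ₗ[R] B,
          (FactorsThroughCopies R X f ↔ FactorsThroughCopies R Y f)) ↔
      Nonempty ((ℕ →₀ X) ≃ₗ[R] (ℕ →₀ Y)) := by
  constructor
  · intro hIdeal
    -- the identity of `X` factors through copies of `X`
    have hXid : FactorsThroughCopies R X (LinearMap.id (M := X)) := by
      refine ⟨PUnit.{v+1}, (Finsupp.LinearEquiv.finsuppUnique R X PUnit.{v+1}).symm.toLinearMap,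
        (Finsupp.LinearEquiv.finsuppUnique R X PUnit.{v+1}).toLinearMap, by ext x; simp⟩
    have hYid : FactorsThroughCopies R Y (LinearMap.id (M := Y)) := by
      refine ⟨PUnit.{v+1}, (Finsupp.LinearEquiv.finsuppUnique R Y PUnit.{v+1}).symm.toLinearMap,
        (Finsupp.LinearEquiv.finsuppUnique R Y PUnit.{v+1}).toLinearMap, by ext x; simp⟩
    -- hence `X` is a summand of `ℕ →₀ Y` and conversely
    have hXY : MySummand R X (ℕ →₀ Y) := by
      obtain ⟨Λ, g, h, hgh⟩ := (hIdeal X X hX hX LinearMap.id).mp hXid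
      exact summand_shrink hXc ⟨g, h, hgh⟩
    have hYX : MySummand R Y (ℕ →₀ X) := by
      obtain ⟨Λ, g, h, hgh⟩ := (hIdeal Y Y hY hY LinearMap.id).mpr hYid
      exact summand_shrink hYc ⟨g, h, hgh⟩
    -- Eilenberg swindle
    have hAB : MySummand R (ℕ →₀ X) (ℕ →₀ Y) :=
      (hXY.finsupp (ι := ℕ)).trans (MySummand.of_equiv (omegaOmegaEquiv Y))
    have hBA : MySummand R (ℕ →₀ Y) (ℕ →₀ X) :=
      (hYX.finsupp (ι := ℕ)).trans (MySummand.of_equiv (omegaOmegaEquiv X))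
    obtain ⟨e1⟩ := absorb hAB (omegaOmegaEquiv Y)
    obtain ⟨e2⟩ := absorb hBA (omegaOmegaEquiv X)
    exact ⟨e2.trans ((LinearEquiv.prodComm R (ℕ →₀ Y) (ℕ →₀ X)).trans e1.symm)⟩
  · rintro ⟨e⟩ A B _ _ _ _ _ _ f
    have hXX : MySummand R X (ℕ →₀ X) :=
      ⟨(peelEquiv X).symm.toLinearMap ∘ₗ LinearMap.inl R X (ℕ →₀ X),
        LinearMap.fst R X (ℕ →₀ X) ∘ₗ (peelEquiv X).toLinearMap, by ext x; simp⟩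
    have hYY : MySummand R Y (ℕ →₀ Y) :=
      ⟨(peelEquiv Y).symm.toLinearMap ∘ₗ LinearMap.inl R Y (ℕ →₀ Y),
        LinearMap.fst R Y (ℕ →₀ Y) ∘ₗ (peelEquiv Y).toLinearMap, by ext y; simp⟩
    have hXY : MySummand R X (ℕ →₀ Y) := hXX.trans (MySummand.of_equiv e)
    have hYX : MySummand R Y (ℕ →₀ X) := hYY.trans (MySummand.of_equiv e.symm)
    exact ⟨fun hf => factors_transfer hXY hf, fun hf => factors_transfer hYX hf⟩
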